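/- If the entries of an n×n Toeplitz matrix satisfy |a_{±m}| = o(m^γ) as m → ∞ for some real γ > -1, then ‖T_n‖ = o(n^{γ+1}) as n → ∞. -/
import Mathlib

open MeasureTheory Filter Asymptotics Real Set

noncomputable def specNorm {n : ℕ} (M : Matrix (Fin n) (Fin n) ℂ) : ℝ :=
  ‖Matrix.toEuclideanCLM (𝕜 := ℂ) (n := Fin n) M‖

noncomputable def toeplitz (a : ℤ → ℂ) (n : ℕ) : Matrix (Fin n) (Fin n) ℂ :=
  Matrix.of fun j k => a ((j : ℤ) - (k : ℤ))

noncomputable abbrev μ01 : Measure ℝ := volume.restrict (Set.Ioo 0 1)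

noncomputable abbrev L2I := Lp ℂ 2 μ01

def IsIntegralOp (k : ℝ → ℝ → ℂ) (K : L2I →L[ℂ] L2I) : Prop :=
  ∀ f : L2I, ∀ᵐ x ∂μ01, (K f : ℝ → ℂ) x = ∫ y in Set.Ioo (0:ℝ) 1, k x y * (f : ℝ → ℂ) y

noncomputable def fc (a : ℝ → ℂ) (k : ℤ) : ℂ :=
  (1 / (2 * π)) * ∫ θ in (-π)..π, a θ * Complex.exp (-Complex.I * k * θ)

/-- Schur-type bound: if all row sums and column sums of entry norms are at most `C`,
then the `ℓ²` operator norm is at most `C`. -/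
lemma schur_bound {n : ℕ} (M : Matrix (Fin n) (Fin n) ℂ) (C : ℝ) (hC : 0 ≤ C)
    (hrow : ∀ j, ∑ k, ‖M j k‖ ≤ C) (hcol : ∀ k, ∑ j, ‖M j k‖ ≤ C) :
    specNorm M ≤ C := by
  refine ContinuousLinearMap.opNorm_le_bound _ hC fun x => ?_
  have hx : ∀ j, (Matrix.toEuclideanCLM (𝕜 := ℂ) (n := Fin n) M) x j = ∑ k, M j k * x k := by
    intro j
    have := Matrix.ofLp_toEuclideanCLM (𝕜 := ℂ) M x
    have h2 := congrFun this j
    simpa [Matrix.mulVec, dotProduct] using h2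
  set y := (Matrix.toEuclideanCLM (𝕜 := ℂ) (n := Fin n) M) x with hy
  have hnorm2 : ‖y‖ ^ 2 = ∑ j, ‖y j‖ ^ 2 := by
    rw [EuclideanSpace.norm_eq]
    rw [Real.sq_sqrt (Finset.sum_nonneg fun j _ => sq_nonneg _)]
  have step1 : ∀ j, ‖y j‖ ^ 2 ≤ C * ∑ k, ‖M j k‖ * ‖x k‖ ^ 2 := by
    intro j
    have h1 : ‖y j‖ ≤ ∑ k, ‖M j k‖ * ‖x k‖ := by
      rw [hx j]
      refine (norm_sum_le _ _).trans (le_of_eq ?_)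
      simp [norm_mul]
    have h2 : (∑ k, ‖M j k‖ * ‖x k‖) ^ 2 ≤
        (∑ k, ‖M j k‖) * ∑ k, ‖M j k‖ * ‖x k‖ ^ 2 := by
      refine Finset.sum_sq_le_sum_mul_sum_of_sq_eq_mul _
        (fun k _ => norm_nonneg _) (fun k _ => mul_nonneg (norm_nonneg _) (sq_nonneg _))
        (fun k _ => by ring)
    calc ‖y j‖ ^ 2 ≤ (∑ k, ‖M j k‖ * ‖x k‖) ^ 2 := by
          apply pow_le_pow_left₀ (norm_nonneg _) h1
      _ ≤ (∑ k, ‖M j k‖) * ∑ k, ‖M j k‖ * ‖x k‖ ^ 2 := h2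
      _ ≤ C * ∑ k, ‖M j k‖ * ‖x k‖ ^ 2 := by
          apply mul_le_mul_of_nonneg_right (hrow j)
          exact Finset.sum_nonneg fun k _ => mul_nonneg (norm_nonneg _) (sq_nonneg _)
  have step2 : ‖y‖ ^ 2 ≤ (C * ‖x‖) ^ 2 := by
    rw [hnorm2]
    calc ∑ j, ‖y j‖ ^ 2 ≤ ∑ j, C * ∑ k, ‖M j k‖ * ‖x k‖ ^ 2 :=
          Finset.sum_le_sum fun j _ => step1 j
      _ = C * ∑ k, (∑ j, ‖M j k‖) * ‖x k‖ ^ 2 := by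
          rw [← Finset.mul_sum, Finset.sum_comm]
          simp_rw [Finset.sum_mul]
      _ ≤ C * ∑ k, C * ‖x k‖ ^ 2 := by
          apply mul_le_mul_of_nonneg_left _ hC
          exact Finset.sum_le_sum fun k _ =>
            mul_le_mul_of_nonneg_right (hcol k) (sq_nonneg _)
      _ = (C * ‖x‖) ^ 2 := by
          rw [← Finset.mul_sum]
          have : ∑ k, ‖x k‖ ^ 2 = ‖x‖ ^ 2 := by
            rw [EuclideanSpace.norm_eq,
              Real.sq_sqrt (Finset.sum_nonneg fun k _ => sq_nonneg _)]
          rw [this]; ring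
  nlinarith [norm_nonneg y, mul_nonneg hC (norm_nonneg x), step2]

/-- Each row sum of entry norms of a Toeplitz matrix is bounded by the total
one-sided sums of the symbol norms. -/
lemma toeplitz_row_sum (a : ℤ → ℂ) (n : ℕ) (j : Fin n) :
    ∑ k : Fin n, ‖a ((j:ℤ) - (k:ℤ))‖ ≤
      ∑ m ∈ Finset.range n, (‖a (m:ℤ)‖ + ‖a (-(m:ℤ))‖) := by
  classical
  rw [Finset.sum_add_distrib]
  rw [← Finset.sum_filter_add_sum_filter_not Finset.univ (fun k : Fin n => (k:ℕ) ≤ (j:ℕ))]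
  set s₁ := Finset.univ.filter (fun k : Fin n => (k:ℕ) ≤ (j:ℕ)) with hs₁
  set s₂ := Finset.univ.filter (fun k : Fin n => ¬((k:ℕ) ≤ (j:ℕ))) with hs₂
  have h1 : ∑ k ∈ s₁, ‖a ((j:ℤ) - (k:ℤ))‖ ≤ ∑ m ∈ Finset.range n, ‖a (m:ℤ)‖ := by
    have hinj : ∀ x ∈ s₁, ∀ y ∈ s₁,
        (fun k : Fin n => (j:ℕ) - (k:ℕ)) x = (fun k : Fin n => (j:ℕ) - (k:ℕ)) y → x = y := by
      intro x hx y hy hxy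
      simp only [hs₁, Finset.mem_filter] at hx hy
      simp only at hxy
      apply Fin.ext; omega
    have himg := Finset.sum_image (g := fun k : Fin n => (j:ℕ) - (k:ℕ))
      (f := fun m : ℕ => ‖a (m:ℤ)‖) hinj
    have heq : ∀ k ∈ s₁, ‖a ((j:ℤ) - (k:ℤ))‖ = ‖a (((j:ℕ) - (k:ℕ) : ℕ) : ℤ)‖ := by
      intro k hk
      simp only [hs₁, Finset.mem_filter] at hk
      congr 2
      omega
    rw [Finset.sum_congr rfl heq, ← himg]
    apply Finset.sum_le_sum_of_subset_of_nonneg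
    · intro m hm
      simp only [Finset.mem_image, hs₁, Finset.mem_filter] at hm
      obtain ⟨k, hk, rfl⟩ := hm
      simp only [Finset.mem_range]
      omega
    · intro m _ _; exact norm_nonneg _
  have h2 : ∑ k ∈ s₂, ‖a ((j:ℤ) - (k:ℤ))‖ ≤ ∑ m ∈ Finset.range n, ‖a (-(m:ℤ))‖ := by
    have hinj : ∀ x ∈ s₂, ∀ y ∈ s₂,
        (fun k : Fin n => (k:ℕ) - (j:ℕ)) x = (fun k : Fin n => (k:ℕ) - (j:ℕ)) y → x = y := by
      intro x hx y hy hxy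
      simp only [hs₂, Finset.mem_filter] at hx hy
      simp only at hxy
      apply Fin.ext; omega
    have himg := Finset.sum_image (g := fun k : Fin n => (k:ℕ) - (j:ℕ))
      (f := fun m : ℕ => ‖a (-(m:ℤ))‖) hinj
    have heq : ∀ k ∈ s₂, ‖a ((j:ℤ) - (k:ℤ))‖ = ‖a (-(((k:ℕ) - (j:ℕ) : ℕ) : ℤ))‖ := by
      intro k hk
      simp only [hs₂, Finset.mem_filter] at hk
      congr 2
      omega
    rw [Finset.sum_congr rfl heq, ← himg]
    apply Finset.sum_le_sum_of_subset_of_nonneg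
    · intro m hm
      simp only [Finset.mem_image, hs₂, Finset.mem_filter] at hm
      obtain ⟨k, hk, rfl⟩ := hm
      simp only [Finset.mem_range]
      omega
    · intro m _ _; exact norm_nonneg _
  exact add_le_add h1 h2

lemma sum_rpow_isBigO (γ : ℝ) (hγ : γ > -1) :
    (fun n : ℕ => ∑ i ∈ Finset.range n, (i:ℝ) ^ γ) =O[atTop] fun n : ℕ => (n:ℝ) ^ (γ + 1) := by
  have hγ1 : (0:ℝ) < γ + 1 := by linarith
  rcases le_or_gt 0 γ with hγ0 | hγ0
  · rw [isBigO_iff]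
    refine ⟨1, Filter.Eventually.of_forall fun n => ?_⟩
    have hsum_nonneg : 0 ≤ ∑ i ∈ Finset.range n, (i:ℝ) ^ γ :=
      Finset.sum_nonneg fun i _ => rpow_nonneg (Nat.cast_nonneg i) _
    rw [Real.norm_of_nonneg hsum_nonneg, Real.norm_of_nonneg (rpow_nonneg (Nat.cast_nonneg n) _),
      one_mul]
    rcases Nat.eq_zero_or_pos n with rfl | hn
    · simp only [Finset.range_zero, Finset.sum_empty, Nat.cast_zero]
      positivity
    have hb : ∑ i ∈ Finset.range n, (i:ℝ) ^ γ ≤ n * (n:ℝ) ^ γ := by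
      calc ∑ i ∈ Finset.range n, (i:ℝ) ^ γ ≤ ∑ i ∈ Finset.range n, (n:ℝ) ^ γ :=
            Finset.sum_le_sum fun i hi => rpow_le_rpow (Nat.cast_nonneg i)
              (Nat.cast_le.mpr (Finset.mem_range.mp hi).le) hγ0
        _ = n * (n:ℝ) ^ γ := by rw [Finset.sum_const, Finset.card_range, nsmul_eq_mul]
    refine hb.trans (le_of_eq ?_)
    have hnpos : (0:ℝ) < n := by exact_mod_cast hn
    rw [Real.rpow_add hnpos, Real.rpow_one]
    ring
  · rw [isBigO_iff]
    refine ⟨1 + 1/(γ+1), ?_⟩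
    filter_upwards [Filter.eventually_ge_atTop 2] with n hn
    have hn1 : 1 ≤ n := by omega
    have hnR : (1:ℝ) ≤ n := by exact_mod_cast hn1
    have hsum_nonneg : 0 ≤ ∑ i ∈ Finset.range n, (i:ℝ) ^ γ :=
      Finset.sum_nonneg fun i _ => rpow_nonneg (Nat.cast_nonneg i) _
    rw [Real.norm_of_nonneg hsum_nonneg, Real.norm_of_nonneg (rpow_nonneg (Nat.cast_nonneg n) _)]
    have hcast : (1:ℝ) + ((n - 1 : ℕ) : ℝ) = n := by
      rw [Nat.cast_sub hn1]; ring
    have hant : AntitoneOn (fun x : ℝ => x ^ γ) (Icc (1:ℝ) (1 + (n - 1 : ℕ))) := by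
      intro x hx y hy hxy
      exact rpow_le_rpow_of_nonpos (lt_of_lt_of_le zero_lt_one hx.1) hxy hγ0.le
    have hint := hant.sum_le_integral
    have hval : ∫ x in (1:ℝ)..(1 + (n - 1 : ℕ)), x ^ γ
        = ((n:ℝ) ^ (γ + 1) - 1) / (γ + 1) := by
      rw [integral_rpow (Or.inl hγ), hcast, Real.one_rpow]
    have hdecomp : ∑ i ∈ Finset.range n, (i:ℝ) ^ γ
        ≤ 1 + ∑ i ∈ Finset.range (n - 1), ((1:ℝ) + ((i + 1 : ℕ) : ℝ)) ^ γ := by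
      have h2n : 2 ≤ n := hn
      rw [← Finset.sum_range_add_sum_Ico _ h2n]
      have hr2 : ∑ i ∈ Finset.range 2, (i:ℝ) ^ γ = 1 := by
        rw [Finset.sum_range_succ, Finset.sum_range_one]
        rw [Nat.cast_zero, Real.zero_rpow (by linarith), Nat.cast_one, Real.one_rpow]
        ring
      rw [hr2]
      gcongr 1 + ?_
      rw [Finset.sum_Ico_eq_sum_range]
      have : ∀ i ∈ Finset.range (n - 2), ((2 + i : ℕ) : ℝ) ^ γ
          = (fun i : ℕ => ((1:ℝ) + ((i + 1 : ℕ) : ℝ)) ^ γ) i := by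
        intro i _
        simp only
        congr 1
        push_cast
        ring
      rw [Finset.sum_congr rfl this]
      apply Finset.sum_le_sum_of_subset_of_nonneg
      · exact Finset.range_subset_range.mpr (by omega)
      · intro i _ _
        exact rpow_nonneg (by positivity) _
    have hone_le : (1:ℝ) ≤ (n:ℝ) ^ (γ + 1) := Real.one_le_rpow hnR hγ1.le
    calc ∑ i ∈ Finset.range n, (i:ℝ) ^ γ
        ≤ 1 + ∑ i ∈ Finset.range (n - 1), ((1:ℝ) + ((i + 1 : ℕ) : ℝ)) ^ γ := hdecomp
      _ ≤ 1 + ((n:ℝ) ^ (γ + 1) - 1) / (γ + 1) := by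
          have := hint.trans_eq hval
          linarith [this]
      _ ≤ 1 + (n:ℝ) ^ (γ + 1) / (γ + 1) := by
          gcongr
          linarith
      _ ≤ (1 + 1/(γ+1)) * (n:ℝ) ^ (γ + 1) := by
          rw [add_mul, one_mul, div_mul_eq_mul_div, one_mul]
          gcongr

theorem stmt2 (a : ℤ → ℂ) (γ : ℝ) (hγ : γ > -1)
    (hp : (fun m : ℕ => ‖a (m : ℤ)‖) =o[atTop] fun m : ℕ => (m : ℝ) ^ γ)
    (hm : (fun m : ℕ => ‖a (-(m : ℤ))‖) =o[atTop] fun m : ℕ => (m : ℝ) ^ γ) :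
    (fun n : ℕ => specNorm (toeplitz a n)) =o[atTop] fun n : ℕ => (n : ℝ) ^ (γ + 1) := by
  set f : ℕ → ℝ := fun m => ‖a (m:ℤ)‖ + ‖a (-(m:ℤ))‖ with hf
  have hfo : f =o[atTop] fun m : ℕ => (m:ℝ) ^ γ := hp.add hm
  have hgnn : ∀ m : ℕ, 0 ≤ (m:ℝ) ^ γ := fun m => rpow_nonneg (Nat.cast_nonneg m) _
  have hgtop : Tendsto (fun n : ℕ => ∑ i ∈ Finset.range n, (i:ℝ) ^ γ) atTop atTop := by
    refine (not_summable_iff_tendsto_nat_atTop_of_nonneg hgnn).mp ?_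
    rw [summable_nat_rpow]
    linarith
  have hsum := hfo.sum_range hgnn hgtop
  have hlittle : (fun n : ℕ => ∑ i ∈ Finset.range n, f i) =o[atTop]
      fun n : ℕ => (n:ℝ) ^ (γ + 1) := hsum.trans_isBigO (sum_rpow_isBigO γ hγ)
  have hbound : ∀ n, specNorm (toeplitz a n) ≤ ∑ i ∈ Finset.range n, f i := by
    intro n
    apply schur_bound
    · exact Finset.sum_nonneg fun i _ => add_nonneg (norm_nonneg _) (norm_nonneg _)
    · intro j
      exact toeplitz_row_sum a n j
    · intro k
      have h := toeplitz_row_sum (fun d => a (-d)) n k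
      simp only [neg_sub, neg_neg] at h
      calc ∑ j : Fin n, ‖toeplitz a n j k‖ = ∑ j : Fin n, ‖a ((j:ℤ) - (k:ℤ))‖ := rfl
        _ ≤ ∑ m ∈ Finset.range n, (‖a (-(m:ℤ))‖ + ‖a (m:ℤ)‖) := h
        _ = ∑ i ∈ Finset.range n, f i := Finset.sum_congr rfl fun m _ => add_comm _ _
  have hO : (fun n : ℕ => specNorm (toeplitz a n)) =O[atTop]
      fun n : ℕ => ∑ i ∈ Finset.range n, f i := by
    rw [isBigO_iff]
    refine ⟨1, Filter.Eventually.of_forall fun n => ?_⟩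
    rw [one_mul]
    have hnn : 0 ≤ specNorm (toeplitz a n) := norm_nonneg _
    rw [Real.norm_of_nonneg hnn]
    exact (hbound n).trans (le_abs_self _)
  exact hO.trans_isLittleO hlittle
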